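/- For any κ, η ∈ (0,1), with κ̄ := √(1 − κ²), there exists an odd Pellian polynomial J with real coefficients whose degree is the smallest odd integer l satisfying l ≥ κ⁻¹·ln(2/√η), such that |J(x)|² ≤ η for all x with |x| ≤ κ̄. -/

import Mathlib

/-- A polynomial over `ℂ` is an even function. -/
def IsEvenPoly (P : Polynomial ℂ) : Prop := ∀ x : ℂ, P.eval (-x) = P.eval x

/-- A polynomial over `ℂ` is an odd function. -/
def IsOddPoly (P : Polynomial ℂ) : Prop := ∀ x : ℂ, P.eval (-x) = -P.eval x

/-- `P, Q ∈ ℂ[x]` form a Pell pair: fixed and opposite parity, and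
`|P(x)|² + (1 - x²)|Q(x)|² = 1` on `[-1,1]`. -/
def PellPair (P Q : Polynomial ℂ) : Prop :=
  ((IsEvenPoly P ∧ IsOddPoly Q) ∨ (IsOddPoly P ∧ IsEvenPoly Q)) ∧
    ∀ x : ℝ, x ∈ Set.Icc (-1 : ℝ) 1 →
      ‖P.eval (x : ℂ)‖ ^ 2 + (1 - x ^ 2) * ‖Q.eval (x : ℂ)‖ ^ 2 = 1

/-- A polynomial is Pellian if it is the first member of some Pell pair. -/
def Pellian (P : Polynomial ℂ) : Prop := ∃ Q : Polynomial ℂ, PellPair P Q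


namespace PellAux
open Polynomial


/-- approach-from-the-right nonnegativity. -/
lemma eval_nonneg_of_forall_gt (p : ℝ[X]) (a : ℝ) (h : ∀ t, a < t → 0 ≤ p.eval t) :
    0 ≤ p.eval a := by
  have h1 : Filter.Tendsto (fun n : ℕ => a + 1 / (n + 1)) Filter.atTop (nhds a) := by
    have := (tendsto_one_div_add_atTop_nhds_zero_nat : Filter.Tendsto (fun n : ℕ => 1 / ((n : ℝ) + 1)) Filter.atTop (nhds 0))
    simpa using (tendsto_const_nhds (x := a)).add this
  have h2 : Filter.Tendsto (fun n : ℕ => p.eval (a + 1 / (n + 1))) Filter.atTop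
      (nhds (p.eval a)) := ((p.continuous_aeval).tendsto a).comp h1
  refine ge_of_tendsto h2 (Filter.Eventually.of_forall fun n => h _ ?_)
  have : (0:ℝ) < 1 / (n + 1) := by positivity
  linarith

lemma cosh_surj {y : ℝ} (hy : 1 ≤ y) : ∃ u, 0 ≤ u ∧ Real.cosh u = y := by
  have h0 : (0:ℝ) ≤ y := by linarith
  have hy2 : y ≤ Real.cosh y := by
    have h1 : y ≤ Real.sinh y := (Real.self_le_sinh_iff).2 h0
    have h2 : Real.sinh y ≤ Real.cosh y := by
      have := Real.cosh_sq y
      nlinarith [Real.cosh_pos y, Real.sinh_nonneg_iff.mpr h0]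
    linarith
  have := intermediate_value_Icc h0 (Real.continuous_cosh.continuousOn (s := Set.Icc 0 y))
  have hmem : y ∈ Set.Icc (Real.cosh 0) (Real.cosh y) := by
    simp only [Real.cosh_zero]; exact ⟨hy, hy2⟩
  obtain ⟨u, hu, hcu⟩ := this hmem
  exact ⟨u, hu.1, hcu⟩

lemma sinh_le_mul_cosh {v : ℝ} (hv : 0 ≤ v) : Real.sinh v ≤ v * Real.cosh v := by
  have hmono : MonotoneOn (fun x => x * Real.cosh x - Real.sinh x) (Set.Ici (0:ℝ)) := by
    apply monotoneOn_of_deriv_nonneg (convex_Ici 0)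
    · fun_prop
    · intro x _
      exact (((hasDerivAt_id x).mul (Real.hasDerivAt_cosh x)).sub
        (Real.hasDerivAt_sinh x)).differentiableAt.differentiableWithinAt
    · intro x hx
      rw [interior_Ici] at hx
      have hD : HasDerivAt (fun x => x * Real.cosh x - Real.sinh x)
          (1 * Real.cosh x + x * Real.sinh x - Real.cosh x) x :=
        ((hasDerivAt_id x).mul (Real.hasDerivAt_cosh x)).sub (Real.hasDerivAt_sinh x)
      rw [hD.deriv]
      have hx0 : (0:ℝ) < x := hx
      nlinarith [Real.sinh_nonneg_iff.mpr hx0.le]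
  have := hmono (Set.self_mem_Ici) (Set.mem_Ici.mpr hv) hv
  simp only [Real.sinh_zero, Real.cosh_zero, zero_mul, sub_zero] at this
  linarith

lemma T_real_cosh (n : ℤ) (t : ℝ) :
    (Polynomial.Chebyshev.T ℝ n).eval (Real.cosh t) = Real.cosh (n * t) := by
  have h : (((Polynomial.Chebyshev.T ℝ n).eval (Real.cosh t) : ℝ) : ℂ)
      = ((Real.cosh (n * t) : ℝ) : ℂ) := by
    rw [Polynomial.Chebyshev.complex_ofReal_eval_T, Complex.ofReal_cosh, Complex.ofReal_cosh,
      ← Complex.cos_mul_I, Polynomial.Chebyshev.T_complex_cos, ← Complex.cos_mul_I]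
    push_cast
    ring_nf
  exact_mod_cast h


lemma T_comp_neg_X (n : ℕ) :
    (Polynomial.Chebyshev.T ℝ n).comp (-X) = (-1)^n * Polynomial.Chebyshev.T ℝ n := by
  induction n using Nat.strong_induction_on with
  | _ n ih =>
    match n with
    | 0 => simp [Polynomial.Chebyshev.T_zero]
    | 1 => simp [Polynomial.Chebyshev.T_one]
    | (m+2) =>
      have h2 : Polynomial.Chebyshev.T ℝ ((m:ℤ)+2)
          = 2 * X * Polynomial.Chebyshev.T ℝ ((m:ℤ)+1) - Polynomial.Chebyshev.T ℝ (m:ℤ) :=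
        Polynomial.Chebyshev.T_add_two ℝ m
      have hm : ((m+2 : ℕ) : ℤ) = (m:ℤ) + 2 := by push_cast; ring
      have hm1 : ((m+1 : ℕ) : ℤ) = (m:ℤ) + 1 := by push_cast; ring
      rw [hm, h2]
      have i1 := ih (m+1) (by omega)
      have i0 := ih m (by omega)
      rw [hm1] at i1
      simp only [sub_comp, mul_comp, X_comp, ofNat_comp]
      rw [i1, i0]
      ring

lemma T_natDegree_aux (n : ℕ) :
    (Polynomial.Chebyshev.T ℝ (n+1)).natDegree = n + 1 ∧
      (Polynomial.Chebyshev.T ℝ (n+1)).coeff (n+1) = 2^n := by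
  induction n using Nat.strong_induction_on with
  | _ n ih =>
    match n with
    | 0 => simp [Polynomial.Chebyshev.T_one]
    | 1 =>
      have : Polynomial.Chebyshev.T ℝ ((0:ℤ)+2) = 2 * X ^ 2 - 1 := by
        simpa using Polynomial.Chebyshev.T_two ℝ
      norm_num at this
      rw [show ((1:ℕ)+1 : ℤ) = 2 by norm_num, this]
      constructor
      · compute_degree!
      · simp [coeff_sub, coeff_one]
    | (m+2) =>
      have i1 := ih (m+1) (by omega)
      have i0 := ih m (by omega)
      have h2 : Polynomial.Chebyshev.T ℝ ((m:ℤ)+1+2)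
          = 2 * X * Polynomial.Chebyshev.T ℝ ((m:ℤ)+1+1) - Polynomial.Chebyshev.T ℝ ((m:ℤ)+1) :=
        Polynomial.Chebyshev.T_add_two ℝ (m+1)
      have hm : ((m+2 : ℕ) : ℤ) + 1 = (m:ℤ) + 1 + 2 := by push_cast; ring
      have hm1 : ((m+1 : ℕ) : ℤ) + 1 = (m:ℤ) + 1 + 1 := by push_cast; ring
      have hm0 : ((m : ℕ) : ℤ) + 1 = (m:ℤ) + 1 := by push_cast; ring
      rw [hm, h2, ← hm1]
      set Tm1 := Polynomial.Chebyshev.T ℝ ((m+1:ℕ)+1) with hTm1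
      set Tm0 := Polynomial.Chebyshev.T ℝ ((m:ℕ)+1) with hTm0
      have hTne : Tm1 ≠ 0 := by
        intro h
        rw [h] at i1
        simp at i1
      have hXT : (2 * X * Tm1).natDegree = m + 3 := by
        rw [show (2 * X * Tm1) = (2*X) * Tm1 by ring, natDegree_mul (by
          intro h
          have := congrArg (fun p => coeff p 1) h
          simp at this) hTne]
        have : (2 * X : ℝ[X]).natDegree = 1 := by compute_degree!
        omega
      have hlt : Tm0.natDegree < (2 * X * Tm1).natDegree := by
        rw [hXT, i0.1]; omega
      have hc0 : Tm0.coeff (m+2+1) = 0 :=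
        coeff_eq_zero_of_natDegree_lt (by rw [i0.1]; omega)
      have hc1 : (2 * X * Tm1).coeff (m + 2 + 1) = 2 * Tm1.coeff (m + 2) := by
        rw [mul_assoc, (map_ofNat (Polynomial.C : ℝ →+* ℝ[X]) 2).symm, coeff_C_mul, coeff_X_mul]
      have hc2 : Tm1.coeff (m+2) = 2^(m+1) := i1.2
      constructor
      · rw [natDegree_sub_eq_left_of_natDegree_lt hlt, hXT]
      · rw [coeff_sub, hc1, hc0, hc2]
        ring

lemma T_natDegree (n : ℕ) : (Polynomial.Chebyshev.T ℝ n).natDegree = n := by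
  match n with
  | 0 => simp [Polynomial.Chebyshev.T_zero]
  | (m+1) => exact_mod_cast (T_natDegree_aux m).1

lemma T_abs_le_one (n : ℤ) {y : ℝ} (hy : |y| ≤ 1) :
    |(Polynomial.Chebyshev.T ℝ n).eval y| ≤ 1 := by
  have h1 : -1 ≤ y := by cases abs_le.mp hy; assumption
  have h2 : y ≤ 1 := by cases abs_le.mp hy; assumption
  rw [← Real.cos_arccos h1 h2, Polynomial.Chebyshev.T_real_cos]
  exact Real.abs_cos_le_one _

lemma one_le_T (n : ℤ) {y : ℝ} (hy : 1 ≤ y) :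
    1 ≤ (Polynomial.Chebyshev.T ℝ n).eval y := by
  obtain ⟨u, -, rfl⟩ := cosh_surj hy
  rw [T_real_cosh]
  exact Real.one_le_cosh _

lemma T_mono (n : ℤ) {y z : ℝ} (h1 : 1 ≤ y) (hyz : y ≤ z) :
    (Polynomial.Chebyshev.T ℝ n).eval y ≤ (Polynomial.Chebyshev.T ℝ n).eval z := by
  obtain ⟨u, hu, rfl⟩ := cosh_surj h1
  obtain ⟨w, hw, rfl⟩ := cosh_surj (le_trans h1 hyz)
  rw [T_real_cosh, T_real_cosh]
  rw [Real.cosh_le_cosh] at hyz ⊢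
  calc |(n:ℝ) * u| = |(n:ℝ)| * |u| := abs_mul _ _
    _ ≤ |(n:ℝ)| * |w| := by
        apply mul_le_mul_of_nonneg_left hyz (abs_nonneg _)
    _ = |(n:ℝ) * w| := (abs_mul _ _).symm


lemma coeff_comp_neg_X (p : ℝ[X]) (n : ℕ) :
    (p.comp (-X)).coeff n = (-1)^n * p.coeff n := by
  induction p using Polynomial.induction_on' with
  | add p q hp hq => simp [add_comp, coeff_add, hp, hq, mul_add]
  | monomial k a =>
    rw [← C_mul_X_pow_eq_monomial, mul_comp, C_comp, pow_comp, X_comp, neg_pow]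
    rw [show ((-1:ℝ[X])^k = Polynomial.C ((-1:ℝ)^k)) by rw [map_pow, map_neg, map_one]]
    rw [coeff_C_mul, coeff_C_mul, coeff_C_mul, coeff_X_pow]
    by_cases h : n = k
    · subst h; ring
    · simp [h]

lemma even_decomp (p : ℝ[X]) (hp : p.comp (-X) = p) : ∃ r : ℝ[X], p = r.comp (X^2) := by
  have hodd : ∀ n : ℕ, ¬ Even n → p.coeff n = 0 := by
    intro n hn
    have h1 : (p.comp (-X)).coeff n = p.coeff n := by rw [hp]
    rw [coeff_comp_neg_X, (Nat.not_even_iff_odd.mp hn).neg_one_pow] at h1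
    linarith
  refine ⟨∑ k ∈ Finset.range (p.natDegree + 1), Polynomial.C (p.coeff (2*k)) * X^k, ?_⟩
  have hcomp : (∑ k ∈ Finset.range (p.natDegree + 1),
      Polynomial.C (p.coeff (2*k)) * X^k).comp (X^2)
      = ∑ k ∈ Finset.range (p.natDegree + 1), Polynomial.C (p.coeff (2*k)) * X^(2*k) := by
    rw [Polynomial.comp, Polynomial.eval₂_finset_sum]
    apply Finset.sum_congr rfl
    intro k _
    rw [eval₂_mul, eval₂_C, eval₂_X_pow, ← pow_mul]
  rw [hcomp]
  ext n
  rw [finset_sum_coeff]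
  simp only [coeff_C_mul, coeff_X_pow]
  by_cases hn : Even n
  · obtain ⟨m, rfl⟩ := hn
    have hmm : m + m = 2 * m := by ring
    by_cases hm : m < p.natDegree + 1
    · rw [Finset.sum_eq_single m]
      · simp [hmm]
      · intro k _ hk
        have : ¬ (m + m = 2 * k) := by omega
        simp [this]
      · intro h; exact absurd (Finset.mem_range.mpr hm) h
    · rw [coeff_eq_zero_of_natDegree_lt (by omega), Finset.sum_eq_zero]
      intro k hk
      rw [Finset.mem_range] at hk
      have : ¬ (m + m = 2 * k) := by omega
      simp [this]
  · rw [hodd n hn, Finset.sum_eq_zero]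
    intro k _
    have : ¬ (n = 2 * k) := by
      intro h; exact hn ⟨k, by omega⟩
    simp [this]

lemma nonneg_sum_two_sq_aux : ∀ n (q : ℝ[X]), q.natDegree = n → (∀ t, 0 ≤ q.eval t) →
    ∃ A B : ℝ[X], q = A^2 + B^2 := by
  intro n
  induction n using Nat.strong_induction_on with
  | _ n ih =>
  intro q hdeg hq
  by_cases h0 : q.natDegree = 0
  · set c0 := q.coeff 0 with hc0
    have hq0 : q = Polynomial.C c0 := eq_C_of_natDegree_eq_zero h0
    have hcoe : 0 ≤ c0 := by
      have := hq 0
      rwa [hq0, eval_C] at this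
    refine ⟨Polynomial.C (Real.sqrt c0), 0, ?_⟩
    rw [hq0, ← map_pow, Real.sq_sqrt hcoe]
    ring
  · have hq0 : q ≠ 0 := fun h => h0 (by simp [h])
    have hdegpos : 0 < (q.map (algebraMap ℝ ℂ)).degree := by
      rw [Polynomial.degree_map]
      exact natDegree_pos_iff_degree_pos.mp (Nat.pos_of_ne_zero h0)
    obtain ⟨z, hz⟩ := Complex.exists_root hdegpos
    by_cases him : z.im = 0
    · -- real root
      set x := z.re with hx
      have hzx : z = (x : ℂ) := Complex.ext rfl him
      have hroot : q.eval x = 0 := by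
        have h1 : (q.map (algebraMap ℝ ℂ)).eval (x:ℂ) = 0 := hzx ▸ hz
        have h1' : (q.map (algebraMap ℝ ℂ)).eval ((algebraMap ℝ ℂ) x) = 0 := h1
        rw [Polynomial.eval_map, Polynomial.eval₂_at_apply] at h1'
        exact (_root_.map_eq_zero _).mp h1'
      have hderiv : q.derivative.eval x = 0 := by
        have hmin : IsLocalMin (fun t => q.eval t) x :=
          Filter.Eventually.of_forall (fun t => by
            simp only [hroot]; exact hq t)
        exact hmin.hasDerivAt_eq_zero (q.hasDerivAt x)
      obtain ⟨k, hk⟩ := dvd_iff_isRoot.mpr hroot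
      have hkx : k.eval x = 0 := by
        have h2 : q.derivative = k + (X - Polynomial.C x) * k.derivative := by
          rw [hk, derivative_mul]
          simp
        have h3 := congrArg (Polynomial.eval x) h2
        simp only [hderiv, eval_add, eval_mul, eval_sub, eval_X, eval_C, sub_self,
          zero_mul, add_zero] at h3
        linarith
      obtain ⟨m, hm⟩ := dvd_iff_isRoot.mpr hkx
      have hqm : q = (X - Polynomial.C x)^2 * m := by rw [hk, hm]; ring
      have hm0 : m ≠ 0 := fun h => hq0 (by rw [hqm, h, mul_zero])
      have hmd : m.natDegree < n := by
        have h4 : q.natDegree = 2 + m.natDegree := by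
          rw [hqm, natDegree_mul (pow_ne_zero 2 (X_sub_C_ne_zero x)) hm0,
            natDegree_pow, natDegree_X_sub_C]
        omega
      have hmne : ∀ t, t ≠ x → 0 ≤ m.eval t := by
        intro t ht
        have h5 : q.eval t = (t - x)^2 * m.eval t := by rw [hqm]; simp
        have h6 : 0 < (t - x)^2 := by
          have : t - x ≠ 0 := sub_ne_zero.mpr ht
          positivity
        nlinarith [hq t]
      have hmpos : ∀ t, 0 ≤ m.eval t := by
        intro t
        rcases eq_or_ne t x with rfl | hne2
        · exact eval_nonneg_of_forall_gt m x (fun s hs => hmne s (fun h => absurd (h ▸ hs) (lt_irrefl x)))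
        · exact hmne t hne2
      obtain ⟨A, B, hAB⟩ := ih m.natDegree hmd m rfl hmpos
      exact ⟨(X - Polynomial.C x) * A, (X - Polynomial.C x) * B, by rw [hqm, hAB]; ring⟩
    · -- nonreal root
      have hconj : (q.map (algebraMap ℝ ℂ)).eval ((starRingEnd ℂ) z) = 0 := by
        have hmapmap : (q.map (algebraMap ℝ ℂ)).map (starRingEnd ℂ) = q.map (algebraMap ℝ ℂ) := by
          rw [Polynomial.map_map]
          congr 1
          exact RingHom.ext fun r => Complex.conj_ofReal r
        have h7 : ((q.map (algebraMap ℝ ℂ)).map (starRingEnd ℂ)).eval ((starRingEnd ℂ) z)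
            = (starRingEnd ℂ) ((q.map (algebraMap ℝ ℂ)).eval z) := by
          rw [Polynomial.eval_map, Polynomial.eval₂_at_apply]
        rw [hmapmap] at h7
        rw [h7, hz.eq_zero, map_zero]
      obtain ⟨k, hk⟩ := dvd_iff_isRoot.mpr (hz : _)
      have hkc : k.eval ((starRingEnd ℂ) z) = 0 := by
        have h8 := hconj
        rw [hk, eval_mul, eval_sub, eval_X, eval_C] at h8
        have h9 : (starRingEnd ℂ) z - z ≠ 0 := by
          intro h
          apply him
          have : (starRingEnd ℂ) z = z := by linear_combination h
          exact Complex.conj_eq_iff_im.mp this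
        exact (mul_eq_zero.mp h8).resolve_left h9
      obtain ⟨k2, hk2⟩ := dvd_iff_isRoot.mpr hkc
      set pr := z.re with hpr
      set s := z.im with hs
      set D : ℝ[X] := X^2 - Polynomial.C (2*pr) * X + Polynomial.C (pr^2 + s^2) with hD
      have hDmap : D.map (algebraMap ℝ ℂ)
          = (X - Polynomial.C z) * (X - Polynomial.C ((starRingEnd ℂ) z)) := by
        have hzc : z + (starRingEnd ℂ) z = ((2*pr : ℝ) : ℂ) := by
          rw [Complex.add_conj]
        have hzm : z * (starRingEnd ℂ) z = ((pr^2 + s^2 : ℝ) : ℂ) := by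
          rw [Complex.mul_conj]
          rw [Complex.normSq_apply]
          push_cast; ring
        simp only [hD, Polynomial.map_add, Polynomial.map_sub, Polynomial.map_mul,
          Polynomial.map_pow, Polynomial.map_X, Polynomial.map_C]
        have e1 : Polynomial.C ((algebraMap ℝ ℂ) (2*pr))
            = Polynomial.C z + Polynomial.C ((starRingEnd ℂ) z) := by
          rw [show (algebraMap ℝ ℂ) (2*pr) = z + (starRingEnd ℂ) z from by rw [hzc]; rfl, map_add]
        have e2 : Polynomial.C ((algebraMap ℝ ℂ) (pr^2 + s^2))
            = Polynomial.C z * Polynomial.C ((starRingEnd ℂ) z) := by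
          rw [show (algebraMap ℝ ℂ) (pr^2+s^2) = z * (starRingEnd ℂ) z from by rw [hzm]; rfl, map_mul]
        rw [e1, e2]
        ring
      have hDdvd : D ∣ q := by
        rw [← Polynomial.map_dvd_map' (algebraMap ℝ ℂ)]
        rw [hDmap, hk, hk2]
        exact ⟨k2, by ring⟩
      obtain ⟨m, hm⟩ := hDdvd
      have hDpos : ∀ t, 0 < D.eval t := by
        intro t
        have h10 : D.eval t = (t - pr)^2 + s^2 := by
          simp only [hD, eval_add, eval_sub, eval_mul, eval_pow, eval_X, eval_C]
          ring
        rw [h10]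
        have : s ≠ 0 := him
        positivity
      have hD0 : D ≠ 0 := fun h => by
        have := hDpos 0
        rw [h] at this
        simp at this
      have hm0 : m ≠ 0 := fun h => hq0 (by rw [hm, h, mul_zero])
      have hDdeg : D.natDegree = 2 := by
        rw [hD]
        compute_degree!
      have hmd : m.natDegree < n := by
        have h11 : q.natDegree = 2 + m.natDegree := by
          rw [hm, natDegree_mul hD0 hm0, hDdeg]
        omega
      have hmpos : ∀ t, 0 ≤ m.eval t := by
        intro t
        have h12 : q.eval t = D.eval t * m.eval t := by rw [hm]; simp
        nlinarith [hq t, hDpos t]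
      obtain ⟨A, B, hAB⟩ := ih m.natDegree hmd m rfl hmpos
      refine ⟨(X - Polynomial.C pr) * A - Polynomial.C s * B,
        (X - Polynomial.C pr) * B + Polynomial.C s * A, ?_⟩
      have hDalt : D = (X - Polynomial.C pr)^2 + (Polynomial.C s)^2 := by
        rw [hD]
        have e3 : Polynomial.C (pr^2 + s^2)
            = (Polynomial.C pr)^2 + (Polynomial.C s)^2 := by
          rw [map_add, map_pow, map_pow]
        have e4 : Polynomial.C (2*pr) = 2 * Polynomial.C pr := by
          rw [map_mul, map_ofNat]
        rw [e3, e4]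
        ring
      rw [hm, hAB, hDalt]
      ring

lemma nonneg_sum_two_sq (q : ℝ[X]) (hq : ∀ t, 0 ≤ q.eval t) : ∃ A B : ℝ[X], q = A^2 + B^2 :=
  nonneg_sum_two_sq_aux q.natDegree q rfl hq

lemma pellian_of_odd (J : ℝ[X]) (hodd : J.comp (-X) = -J)
    (hb1 : ∀ x : ℝ, |x| ≤ 1 → |J.eval x| ≤ 1)
    (hb2 : ∀ x : ℝ, 1 ≤ |x| → 1 ≤ |J.eval x|)
    (hJ1 : J.eval 1 = 1) :
    Pellian (J.map (algebraMap ℝ ℂ)) := by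
  set N : ℝ[X] := 1 - J^2 with hNdef
  have hNeval : ∀ x : ℝ, N.eval x = 1 - (J.eval x)^2 := by
    intro x; simp [hNdef]
  have hJm1 : J.eval (-1) = -1 := by
    have h := congrArg (Polynomial.eval (1:ℝ)) hodd
    simpa [eval_comp, hJ1] using h
  have hN1 : N.eval 1 = 0 := by rw [hNeval, hJ1]; ring
  have hNm1 : N.eval (-1) = 0 := by rw [hNeval, hJm1]; ring
  obtain ⟨K, hK⟩ := dvd_iff_isRoot.mpr hN1
  have hKm1 : K.eval (-1) = 0 := by
    have h := congrArg (Polynomial.eval (-1:ℝ)) hK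
    rw [hNm1] at h
    simp only [eval_mul, eval_sub, eval_X, eval_C] at h
    linarith
  obtain ⟨L, hL⟩ := dvd_iff_isRoot.mpr hKm1
  set S : ℝ[X] := -L with hSdef
  have hNS : N = (1 - X^2) * S := by
    rw [hK, hL, hSdef]
    simp only [map_neg, map_one]
    ring
  have hSeval : ∀ x : ℝ, 1 - (J.eval x)^2 = (1 - x^2) * S.eval x := by
    intro x
    have h := congrArg (Polynomial.eval x) hNS
    rw [hNeval] at h
    simpa using h
  have hSnn' : ∀ x : ℝ, x ≠ 1 → x ≠ -1 → 0 ≤ S.eval x := by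
    intro x hx1 hxm1
    rcases lt_trichotomy (|x|) 1 with h | h | h
    · have hx2 : x^2 < 1 := by nlinarith [abs_nonneg x, sq_abs x, h]
      have hj : (J.eval x)^2 ≤ 1 := by
        have h1 := hb1 x h.le
        nlinarith [abs_nonneg (J.eval x), sq_abs (J.eval x)]
      nlinarith [hSeval x]
    · rcases abs_eq (by norm_num : (0:ℝ) ≤ 1) |>.mp h with h' | h'
      · exact absurd h' hx1
      · exact absurd h' hxm1
    · have hx2 : 1 < x^2 := by nlinarith [abs_nonneg x, sq_abs x]
      have hj : 1 ≤ (J.eval x)^2 := by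
        have h1 := hb2 x h.le
        nlinarith [abs_nonneg (J.eval x), sq_abs (J.eval x)]
      by_contra hS
      push_neg at hS
      have hprod : 0 < (1 - x^2) * S.eval x := mul_pos_of_neg_of_neg (by linarith) hS
      nlinarith [hSeval x]
  have hS1 : 0 ≤ S.eval 1 :=
    eval_nonneg_of_forall_gt S 1 (fun t ht =>
      hSnn' t (by intro h; rw [h] at ht; linarith) (by intro h; rw [h] at ht; linarith))
  have hSnn : ∀ x : ℝ, 0 ≤ S.eval x := by
    have hSm1 : 0 ≤ S.eval (-1) :=
      eval_nonneg_of_forall_gt S (-1) (fun t ht => by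
        rcases eq_or_ne t 1 with rfl | h1t
        · exact hS1
        · exact hSnn' t h1t (by intro h; rw [h] at ht; linarith))
    intro x
    rcases eq_or_ne x 1 with rfl | h1
    · exact hS1
    rcases eq_or_ne x (-1) with rfl | h2
    · exact hSm1
    exact hSnn' x h1 h2
  have h1x2 : (1 - X^2 : ℝ[X]) ≠ 0 := by
    intro h
    have := congrArg (Polynomial.eval (0:ℝ)) h
    simp at this
  have hSeven : S.comp (-X) = S := by
    have hNeven : N.comp (-X) = N := by
      simp only [hNdef, sub_comp, one_comp, pow_comp, hodd]
      ring
    have h := congrArg (fun p : ℝ[X] => p.comp (-X)) hNS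
    simp only [mul_comp, sub_comp, one_comp, pow_comp, X_comp] at h
    rw [hNeven, hNS] at h
    have h' : (1 - X^2 : ℝ[X]) * S = (1 - X^2) * S.comp (-X) := by
      rw [h]; ring_nf
    exact (mul_left_cancel₀ h1x2 h').symm
  obtain ⟨r, hr⟩ := even_decomp S hSeven
  have hrnn : ∀ t : ℝ, 0 ≤ r.eval t := by
    intro t
    rcases le_or_gt 0 t with ht | ht
    · have h1 : S.eval (Real.sqrt t) = r.eval t := by
        rw [hr, eval_comp]
        simp [Real.sq_sqrt ht]
      linarith [hSnn (Real.sqrt t)]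
    · -- t < 0 : use imaginary axis
      set u := Real.sqrt (-t) with hu
      have hu2 : u^2 = -t := Real.sq_sqrt (by linarith)
      set f := algebraMap ℝ ℂ with hf
      set z : ℂ := (u : ℂ) * Complex.I with hz
      set w : ℂ := (J.map f).eval z with hw
      have hJcodd : (J.map f).comp (-X) = -(J.map f) := by
        have h := congrArg (fun p : ℝ[X] => p.map f) hodd
        simpa [Polynomial.map_comp] using h
      have hwconj : (starRingEnd ℂ) w = -w := by
        have hmapmap : (J.map f).map (starRingEnd ℂ) = J.map f := by
          rw [Polynomial.map_map]
          congr 1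
          exact RingHom.ext fun r => Complex.conj_ofReal r
        have h7 : ((J.map f).map (starRingEnd ℂ)).eval ((starRingEnd ℂ) z)
            = (starRingEnd ℂ) ((J.map f).eval z) := by
          rw [Polynomial.eval_map, Polynomial.eval₂_at_apply]
        rw [hmapmap] at h7
        have hzc : (starRingEnd ℂ) z = -z := by
          simp [hz]
        rw [hzc] at h7
        have h8 : (J.map f).eval (-z) = -w := by
          have h9 := congrArg (Polynomial.eval z) hJcodd
          simpa [eval_comp, hw] using h9
        rw [← h7, h8, hw]
      have hwre : w.re = 0 := by
        have := congrArg Complex.re hwconj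
        simp only [Complex.conj_re, Complex.neg_re] at this
        linarith
      obtain ⟨b, hb⟩ : ∃ b : ℝ, w = (b : ℂ) * Complex.I :=
        ⟨w.im, by apply Complex.ext <;> simp [hwre]⟩
      have hw2 : w^2 = ((-(b^2) : ℝ) : ℂ) := by
        rw [hb]
        push_cast
        rw [mul_pow, Complex.I_sq]
        ring
      have hNS' : (1 - J^2 : ℝ[X]) = (1 - X^2) * S := by rw [← hNdef]; exact hNS
      have h10 := congrArg (fun p : ℝ[X] => (p.map f).eval z) hNS'
      simp only [Polynomial.map_sub, Polynomial.map_mul, Polynomial.map_one,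
        Polynomial.map_pow, Polynomial.map_X, eval_mul, eval_sub, eval_one, eval_pow,
        eval_X] at h10
      -- h10 : 1 - ((J.map f).eval z)^2 = (1 - z^2) * ((S.map f).eval z)
      have hz2 : z^2 = ((-(u^2) : ℝ) : ℂ) := by
        rw [hz]
        push_cast
        rw [mul_pow, Complex.I_sq]
        ring
      have hSz : (S.map f).eval z = ((r.eval t : ℝ) : ℂ) := by
        have h11 : S.map f = (r.map f).comp (X^2) := by
          rw [hr, Polynomial.map_comp]
          simp
        rw [h11, eval_comp, eval_pow, eval_X, hz2]
        have h12 : ((-(u^2) : ℝ) : ℂ) = f t := by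
          rw [hf, hu2]; norm_num
        rw [h12, Polynomial.eval_map, Polynomial.eval₂_at_apply]
        rfl
      rw [hSz, ← hw, hb] at h10
      rw [hb] at hw2
      rw [hw2, hz2] at h10
      have hreal : (1 + u^2) * r.eval t = 1 + b^2 := by
        have hmain : ((1 + u^2 : ℝ) : ℂ) * ((r.eval t : ℝ) : ℂ) = ((1 + b^2 : ℝ) : ℂ) := by
          push_cast
          push_cast at h10
          linear_combination -h10
        exact_mod_cast hmain
      nlinarith [sq_nonneg u, sq_nonneg b]
  obtain ⟨A, B, hAB⟩ := nonneg_sum_two_sq r hrnn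
  set f := algebraMap ℝ ℂ with hf
  refine ⟨((A.comp (X^2)).map f) + Polynomial.C Complex.I * ((B.comp (X^2)).map f),
    Or.inr ⟨?_, ?_⟩, ?_⟩
  · -- IsOddPoly (J.map f)
    intro zz
    have hJcodd : (J.map f).comp (-X) = -(J.map f) := by
      have h := congrArg (fun p : ℝ[X] => p.map f) hodd
      simpa [Polynomial.map_comp] using h
    have h9 := congrArg (Polynomial.eval zz) hJcodd
    simpa [eval_comp] using h9
  · -- IsEvenPoly Q
    intro zz
    simp only [eval_add, eval_mul, eval_C]
    have he : ∀ p : ℝ[X], ((p.comp (X^2)).map f).eval (-zz) = ((p.comp (X^2)).map f).eval zz := by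
      intro p
      rw [Polynomial.map_comp]
      simp [eval_comp]
    rw [he A, he B]
  · -- Pell identity
    intro x _
    have hPx : (J.map f).eval ((x : ℝ) : ℂ) = ((J.eval x : ℝ) : ℂ) := by
      have h : (J.map f).eval (f x) = f (J.eval x) := by
        rw [Polynomial.eval_map, Polynomial.eval₂_at_apply]
      exact h
    have hQA : ((A.comp (X^2)).map f).eval ((x : ℝ) : ℂ) = ((A.eval (x^2) : ℝ) : ℂ) := by
      rw [Polynomial.map_comp]
      simp only [Polynomial.map_pow, Polynomial.map_X, eval_comp, eval_pow, eval_X]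
      have h : ((x:ℂ))^2 = f (x^2) := by
        show ((x:ℂ))^2 = algebraMap ℝ ℂ (x^2)
        rw [show (algebraMap ℝ ℂ) (x^2) = ((x^2 : ℝ) : ℂ) from congrFun Complex.coe_algebraMap _]
        exact_mod_cast (Complex.ofReal_pow x 2).symm
      rw [h, Polynomial.eval_map, Polynomial.eval₂_at_apply]
      rfl
    have hQB : ((B.comp (X^2)).map f).eval ((x : ℝ) : ℂ) = ((B.eval (x^2) : ℝ) : ℂ) := by
      rw [Polynomial.map_comp]
      simp only [Polynomial.map_pow, Polynomial.map_X, eval_comp, eval_pow, eval_X]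
      have h : ((x:ℂ))^2 = f (x^2) := by
        show ((x:ℂ))^2 = algebraMap ℝ ℂ (x^2)
        rw [show (algebraMap ℝ ℂ) (x^2) = ((x^2 : ℝ) : ℂ) from congrFun Complex.coe_algebraMap _]
        exact_mod_cast (Complex.ofReal_pow x 2).symm
      rw [h, Polynomial.eval_map, Polynomial.eval₂_at_apply]
      rfl
    rw [hPx]
    simp only [eval_add, eval_mul, eval_C, hQA, hQB]
    rw [Complex.norm_real, Real.norm_eq_abs]
    have hQform : ((A.eval (x^2) : ℝ) : ℂ) + Complex.I * ((B.eval (x^2) : ℝ) : ℂ)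
        = ((A.eval (x^2) : ℝ) : ℂ) + ((B.eval (x^2) : ℝ) : ℂ) * Complex.I := by ring
    rw [hQform, Complex.sq_norm, Complex.normSq_add_mul_I]
    have hSx : S.eval x = (A.eval (x^2))^2 + (B.eval (x^2))^2 := by
      rw [hr, eval_comp, hAB]
      simp
    have h13 := hSeval x
    rw [hSx] at h13
    rw [sq_abs]
    nlinarith [h13]


end PellAux

open PellAux Polynomial in
set_option maxHeartbeats 1000000 in
theorem exists_fixed_point_damping_poly (κ η : ℝ) (hκ : κ ∈ Set.Ioo (0 : ℝ) 1)
    (hη : η ∈ Set.Ioo (0 : ℝ) 1)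
    (l : ℕ) (hl : IsLeast {n : ℕ | Odd n ∧ κ⁻¹ * Real.log (2 / Real.sqrt η) ≤ (n : ℝ)} l) :
    ∃ J : Polynomial ℝ,
      (∀ x : ℝ, J.eval (-x) = -J.eval x) ∧
      Pellian (J.map (algebraMap ℝ ℂ)) ∧
      J.natDegree = l ∧
      ∀ x : ℝ, |x| ≤ Real.sqrt (1 - κ ^ 2) → |J.eval x| ^ 2 ≤ η := by
  obtain ⟨hκ0, hκ1⟩ := hκ
  obtain ⟨hη0, hη1⟩ := hη
  obtain ⟨⟨hlodd, hlge⟩, -⟩ := hl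
  set a : ℝ := Real.sqrt (1 - κ^2) with ha
  have ha2 : a^2 = 1 - κ^2 := Real.sq_sqrt (by nlinarith)
  have ha0 : 0 < a := Real.sqrt_pos.mpr (by nlinarith)
  have ha1 : a < 1 := by nlinarith
  have hainv : 1 < a⁻¹ := by
    have h := mul_inv_cancel₀ ha0.ne'
    nlinarith [inv_pos.mpr ha0]
  obtain ⟨v, hv0, hv⟩ := cosh_surj (y := a⁻¹) hainv.le
  -- κ ≤ v
  have hsv : Real.sinh v = κ / a := by
    have h1 : Real.sinh v ^ 2 = (κ/a)^2 := by
      have h2 := Real.cosh_sq v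
      rw [hv] at h2
      have h6 : (Real.sinh v ^ 2 + 1) * a^2 = 1 := by
        rw [← h2]
        field_simp
      rw [div_pow, eq_div_iff (by positivity : a^2 ≠ 0)]
      nlinarith [h6, ha2]
    have h2 : 0 ≤ Real.sinh v := Real.sinh_nonneg_iff.mpr hv0
    have h3 : 0 ≤ κ/a := by positivity
    nlinarith
  have hκv : κ ≤ v := by
    have h1 := sinh_le_mul_cosh hv0
    rw [hsv, hv] at h1
    have h2 := mul_le_mul_of_nonneg_right h1 ha0.le
    rw [div_mul_cancel₀ _ ha0.ne'] at h2
    rw [mul_assoc, inv_mul_cancel₀ ha0.ne', mul_one] at h2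
    exact h2
  set c : ℝ := Real.cosh (l * v) with hc
  have hcval : (Polynomial.Chebyshev.T ℝ (l:ℤ)).eval a⁻¹ = c := by
    rw [← hv, T_real_cosh]
    norm_num
    rfl
  have hc1 : 1 ≤ c := Real.one_le_cosh _
  have hc0 : 0 < c := by linarith
  have hsqη : 0 < Real.sqrt η := Real.sqrt_pos.mpr hη0
  have hcbig : 1 ≤ Real.sqrt η * c := by
    have hl1 : (1:ℝ) ≤ (l:ℝ) := by
      obtain ⟨ml, hml⟩ := hlodd
      have : 1 ≤ l := by omega
      exact_mod_cast this
    have h1 : Real.log (2 / Real.sqrt η) ≤ κ * l := by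
      have h2 := mul_le_mul_of_nonneg_left hlge hκ0.le
      rwa [← mul_assoc, mul_inv_cancel₀ hκ0.ne', one_mul] at h2
    have h3 : κ * l ≤ (l:ℝ) * v := by
      have := mul_le_mul_of_nonneg_left hκv (by positivity : (0:ℝ) ≤ (l:ℝ))
      linarith [this]
    have h4 : (2 / Real.sqrt η) ≤ Real.exp ((l:ℝ) * v) := by
      calc 2 / Real.sqrt η = Real.exp (Real.log (2 / Real.sqrt η)) := by
            rw [Real.exp_log (by positivity)]
        _ ≤ Real.exp ((l:ℝ) * v) := Real.exp_le_exp.mpr (by linarith)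
    have h5 : Real.exp ((l:ℝ) * v) ≤ 2 * c := by
      rw [hc, Real.cosh_eq]
      have := Real.exp_pos (-((l:ℝ) * v))
      linarith
    have h6 : 2 / Real.sqrt η ≤ 2 * c := by linarith
    have h7 := mul_le_mul_of_nonneg_left h6 (le_of_lt hsqη)
    rw [mul_div_cancel₀ _ hsqη.ne'] at h7
    linarith
  set Tl : ℝ[X] := Polynomial.Chebyshev.T ℝ (l:ℤ) with hTl
  set J : ℝ[X] := Polynomial.C c⁻¹ * (Tl.comp (Polynomial.C a⁻¹ * X)) with hJ
  have hJeval : ∀ x : ℝ, J.eval x = c⁻¹ * Tl.eval (a⁻¹ * x) := by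
    intro x
    simp [hJ, eval_comp]
  have hTodd : Tl.comp (-X) = -Tl := by
    rw [hTl]
    rw [T_comp_neg_X l, Odd.neg_one_pow hlodd]
    ring
  have hTnegeval : ∀ y : ℝ, Tl.eval (-y) = -Tl.eval y := by
    intro y
    have h := congrArg (Polynomial.eval y) hTodd
    simpa [eval_comp] using h
  have hTabs : ∀ y : ℝ, |Tl.eval y| = |Tl.eval (|y|)| := by
    intro y
    rcases abs_cases y with ⟨h1, _⟩ | ⟨h1, _⟩
    · rw [h1]
    · rw [h1, hTnegeval, abs_neg]
  have hJodd : J.comp (-X) = -J := by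
    have e0 : (Polynomial.C a⁻¹ * X).comp (-X) = (-X).comp (Polynomial.C a⁻¹ * X) := by
      simp
    rw [hJ, mul_comp, C_comp, comp_assoc, e0, ← comp_assoc, hTodd, neg_comp]
    ring
  have hJoddeval : ∀ x : ℝ, J.eval (-x) = -J.eval x := by
    intro x
    have h := congrArg (Polynomial.eval x) hJodd
    simpa [eval_comp] using h
  have hdeg : J.natDegree = l := by
    rw [hJ, natDegree_C_mul (inv_ne_zero hc0.ne'), natDegree_comp, hTl, T_natDegree l,
      natDegree_C_mul (inv_ne_zero ha0.ne'), natDegree_X, mul_one]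
  have hTb : ∀ y : ℝ, |y| ≤ a⁻¹ → |Tl.eval y| ≤ c := by
    intro y hy
    rcases le_or_gt |y| 1 with h1 | h1
    · exact le_trans (T_abs_le_one (l:ℤ) h1) hc1
    · rw [hTabs]
      have h2 : 1 ≤ Tl.eval |y| := one_le_T (l:ℤ) h1.le
      have h3 : Tl.eval |y| ≤ c := by
        rw [← hcval]
        exact T_mono (l:ℤ) h1.le hy
      rw [abs_of_nonneg (by linarith)]
      exact h3
  have hb1 : ∀ x : ℝ, |x| ≤ 1 → |J.eval x| ≤ 1 := by
    intro x hx
    rw [hJeval, abs_mul, abs_of_nonneg (by positivity : (0:ℝ) ≤ c⁻¹)]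
    have h1 : |a⁻¹ * x| ≤ a⁻¹ := by
      rw [abs_mul, abs_of_nonneg (by positivity : (0:ℝ) ≤ a⁻¹)]
      nlinarith [abs_nonneg x, inv_pos.mpr ha0]
    have h2 := hTb _ h1
    calc c⁻¹ * |Tl.eval (a⁻¹ * x)| ≤ c⁻¹ * c :=
          mul_le_mul_of_nonneg_left h2 (by positivity)
      _ = 1 := inv_mul_cancel₀ hc0.ne'
  have hb2 : ∀ x : ℝ, 1 ≤ |x| → 1 ≤ |J.eval x| := by
    intro x hx
    rw [hJeval, abs_mul, abs_of_nonneg (by positivity : (0:ℝ) ≤ c⁻¹)]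
    have h1 : |a⁻¹ * x| = a⁻¹ * |x| := by
      rw [abs_mul, abs_of_nonneg (by positivity : (0:ℝ) ≤ a⁻¹)]
    have h2 : a⁻¹ ≤ a⁻¹ * |x| := by nlinarith [inv_pos.mpr ha0]
    have h3 : c ≤ Tl.eval (a⁻¹ * |x|) := by
      rw [← hcval]
      exact T_mono (l:ℤ) hainv.le h2
    have h4 : |Tl.eval (a⁻¹ * x)| = |Tl.eval (a⁻¹ * |x|)| := by
      rw [hTabs (a⁻¹ * x), h1]
    rw [h4, abs_of_nonneg (by linarith)]
    calc (1:ℝ) = c⁻¹ * c := (inv_mul_cancel₀ hc0.ne').symm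
      _ ≤ c⁻¹ * Tl.eval (a⁻¹ * |x|) := mul_le_mul_of_nonneg_left h3 (by positivity)
  have hJ1 : J.eval 1 = 1 := by
    rw [hJeval, mul_one, hcval]
    exact inv_mul_cancel₀ hc0.ne'
  refine ⟨J, hJoddeval, pellian_of_odd J hJodd hb1 hb2 hJ1, hdeg, ?_⟩
  intro x hx
  have h1 : |a⁻¹ * x| ≤ 1 := by
    rw [abs_mul, abs_of_nonneg (by positivity : (0:ℝ) ≤ a⁻¹)]
    calc a⁻¹ * |x| ≤ a⁻¹ * a := mul_le_mul_of_nonneg_left hx (by positivity)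
      _ = 1 := inv_mul_cancel₀ ha0.ne'
  have h2 := T_abs_le_one (l:ℤ) h1
  have h3 : |J.eval x| ≤ c⁻¹ := by
    rw [hJeval, abs_mul, abs_of_nonneg (by positivity : (0:ℝ) ≤ c⁻¹)]
    calc c⁻¹ * |Tl.eval (a⁻¹ * x)| ≤ c⁻¹ * 1 := mul_le_mul_of_nonneg_left h2 (by positivity)
      _ = c⁻¹ := mul_one _
  have h4 : |J.eval x|^2 ≤ (c⁻¹)^2 := pow_le_pow_left₀ (abs_nonneg _) h3 2
  have h5 : (c⁻¹)^2 ≤ η := by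
    have h6 : 1 ≤ Real.sqrt η * c := hcbig
    have h7 : Real.sqrt η ^ 2 = η := Real.sq_sqrt hη0.le
    have h8 : 0 < c^2 := by positivity
    have h9 : 1 ≤ (Real.sqrt η * c)^2 := by nlinarith
    rw [mul_pow, h7] at h9
    rw [inv_pow]
    rw [inv_le_iff_one_le_mul₀ h8]
    linarith [mul_comm η (c^2)]
  linarith
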